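/- Let q be a real number with 0 < q < 1 and let w > 0 and w₁ > 0 be real. Then for every integer n ≥ 1, the Barnes-type Changhee q-zeta function interpolates the Barnes-type Changhee q-Bernoulli polynomials at non-positive integers: ζ_q(1−n, w | w₁) = −β_n(w:q|w₁)/n. -/

import Mathlib

open Finset

/-- The q-analogue `[z]_q = (1 - q^z)/(1 - q)` for a real exponent `z`. -/
noncomputable def qn (q z : ℝ) : ℝ := (1 - q ^ z) / (1 - q)

/-- The complex power `r^s := exp(s·log r)` of a positive real `r` (real logarithm). -/
noncomputable def rpowC (r : ℝ) (s : ℂ) : ℂ := Complex.exp (s * (Real.log r : ℂ))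

/-- The Barnes-type Changhee q-Bernoulli polynomial `β_n(w:q|w₁)`:
`β_0(w:q|w₁) = (q-1)/log q` and, for `n ≥ 1`,
`β_n(w:q|w₁) = ((q-1)/log q)·(1-q)^{-n} - n·w₁·Σ_{m≥0} q^{w₁m+w}·[w₁m+w]_q^{n-1}`. -/
noncomputable def qBw (q w w1 : ℝ) : ℕ → ℝ
  | 0 => (q - 1) / Real.log q
  | n + 1 => (q - 1) / Real.log q * ((1 - q) ^ (n + 1))⁻¹
      - ((n : ℝ) + 1) * w1 * ∑' m : ℕ, q ^ (w1 * (m : ℝ) + w) * qn q (w1 * (m : ℝ) + w) ^ n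

/-- The Barnes-type Changhee q-zeta function
`ζ_q(s,w|w₁) = -(1-q)^s/((s-1)·log q) + w₁·Σ_{m≥0} q^{w₁m+w}/[w₁m+w]_q^s`. -/
noncomputable def zetaQw (q w w1 : ℝ) (s : ℂ) : ℂ :=
  -(rpowC (1 - q) s) / ((s - 1) * (Real.log q : ℂ))
    + (w1 : ℂ) * ∑' m : ℕ, ((q ^ (w1 * (m : ℝ) + w) : ℝ) : ℂ)
        / rpowC (qn q (w1 * (m : ℝ) + w)) s

/-- Auxiliary: `rpowC r (1 - m) = r / r^m` for `r > 0` and a natural `m`. -/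
lemma rpowC_one_sub (r : ℝ) (hr : 0 < r) (m : ℕ) :
    rpowC r (1 - (m : ℂ)) = (r : ℂ) / (r : ℂ) ^ m := by
  unfold rpowC
  rw [sub_mul, one_mul, Complex.exp_sub, Complex.exp_nat_mul,
    ← Complex.ofReal_exp, Real.exp_log hr]

/-- Auxiliary field identity used in the final computation. -/
lemma zeta_alg (a L c S w : ℂ) (ha : a ≠ 0) (hL : L ≠ 0) (hc : c ≠ 0) (k : ℕ) :
    -(a / a ^ (k + 1)) / ((-c) * L) + w * S
      = -((-a) / L * (a ^ (k + 1))⁻¹ - c * w * S) / c := by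
  have hp : a ^ (k + 1) ≠ 0 := pow_ne_zero _ ha
  field_simp
  ring

/-- The Barnes-type Changhee q-zeta function interpolates the Barnes-type Changhee
q-Bernoulli polynomials at non-positive integers: `ζ_q(1-n, w | w₁) = -β_n(w:q|w₁)/n`. -/
theorem zetaQw_neg_int (q w w1 : ℝ) (hq0 : 0 < q) (hq1 : q < 1)
    (hw : 0 < w) (hw1 : 0 < w1) (n : ℕ) (hn : 1 ≤ n) :
    zetaQw q w w1 (1 - (n : ℂ)) = -((qBw q w w1 n : ℝ) : ℂ) / (n : ℂ) := by
  obtain ⟨k, rfl⟩ : ∃ k, n = k + 1 := ⟨n - 1, (Nat.succ_pred_eq_of_pos hn).symm⟩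
  have hq1' : (0:ℝ) < 1 - q := by linarith
  have hqn : ∀ m : ℕ, 0 < qn q (w1 * (m : ℝ) + w) := by
    intro m
    have hx : 0 < w1 * (m : ℝ) + w := by positivity
    have : q ^ (w1 * (m : ℝ) + w) < 1 := Real.rpow_lt_one hq0.le hq1 hx
    unfold qn
    exact div_pos (by linarith) hq1'
  have hts : (∑' m : ℕ, ((q ^ (w1 * (m : ℝ) + w) : ℝ) : ℂ)
        / rpowC (qn q (w1 * (m : ℝ) + w)) (1 - ((k + 1 : ℕ) : ℂ)))
      = ((∑' m : ℕ, q ^ (w1 * (m : ℝ) + w) * qn q (w1 * (m : ℝ) + w) ^ k : ℝ) : ℂ) := by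
    rw [Complex.ofReal_tsum]
    refine tsum_congr fun m => ?_
    rw [rpowC_one_sub _ (hqn m)]
    have hne : ((qn q (w1 * (m : ℝ) + w) : ℝ) : ℂ) ≠ 0 := by
      exact_mod_cast (hqn m).ne'
    push_cast
    rw [pow_succ]
    field_simp
  have hlogq : Real.log q ≠ 0 := Real.log_ne_zero_of_pos_of_ne_one hq0 (by linarith)
  have hlogqC : ((Real.log q : ℝ) : ℂ) ≠ 0 := by exact_mod_cast hlogq
  have hk1 : ((k : ℂ) + 1) ≠ 0 := Nat.cast_add_one_ne_zero (R := ℂ) k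
  have h1q : ((1 : ℂ) - q) ≠ 0 := by
    have : ((1 - q : ℝ) : ℂ) ≠ 0 := by exact_mod_cast hq1'.ne'
    push_cast at this; exact this
  simp only [zetaQw, qBw, hts, rpowC_one_sub _ hq1']
  rw [show (1 - ((k + 1 : ℕ) : ℂ) - 1) = -((k : ℂ) + 1) by push_cast; ring]
  push_cast
  have := zeta_alg (1 - (q : ℂ)) (Real.log q : ℂ) ((k : ℂ) + 1)
    ((∑' m : ℕ, q ^ (w1 * (m : ℝ) + w) * qn q (w1 * (m : ℝ) + w) ^ k : ℝ) : ℂ)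
    (w1 : ℂ) h1q hlogqC hk1 k
  rw [show -(1 - (q:ℂ)) = (q:ℂ) - 1 by ring] at this
  convert this using 2 <;> push_cast <;> ring
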